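/- Let $E \subseteq \mathbb{R}^n$ be a finite set of vectors and $W \subseteq \mathbb{R}^n$ a linear subspace such that the convex cone generated by $E$ intersects $W$ only in $\{0\}$, and $0 \notin \operatorname{conv}(E)$. Then there exists a linear functional $\alpha: \mathbb{R}^n \to \mathbb{R}$ vanishing on $W$ with $\alpha(e) > 0$ for all $e \in E$. -/

import Mathlib

open Finset Pointwise

/-- The convex cone generated by a finite set `E ⊆ ℝ^n`: all nonnegative linear
combinations of elements of `E`. -/
def coneOf {n : ℕ} (E : Finset (Fin n → ℝ)) : Set (Fin n → ℝ) :=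
  {x | ∃ c : (Fin n → ℝ) → ℝ, (∀ v, 0 ≤ c v) ∧ x = ∑ v ∈ E, c v • v}

/-- If `E ⊆ ℝ^n` is finite, `W` is a linear subspace meeting the
convex cone generated by `E` only in `{0}`, and `0 ∉ conv E`, then there is a linear
functional vanishing on `W` and positive on every element of `E`. -/
theorem exists_functional_vanishing_on_subspace_pos_on_set
    {n : ℕ} (E : Finset (Fin n → ℝ)) (W : Submodule ℝ (Fin n → ℝ))
    (hcone : ∀ x ∈ coneOf E, x ∈ W → x = 0)
    (hconv : (0 : Fin n → ℝ) ∉ convexHull ℝ (E : Set (Fin n → ℝ))) :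
    ∃ α : (Fin n → ℝ) →ₗ[ℝ] ℝ, (∀ w ∈ W, α w = 0) ∧ ∀ e ∈ E, 0 < α e := by
  rcases E.eq_empty_or_nonempty with rfl | ⟨e₀, he₀⟩
  · exact ⟨0, fun w _ => rfl, fun e he => absurd he (by simp)⟩
  -- conv(E) ⊆ cone(E)
  have hsub : convexHull ℝ (E : Set (Fin n → ℝ)) ⊆ coneOf E := by
    intro x hx
    rw [Finset.convexHull_eq] at hx
    obtain ⟨w, hw0, hw1, hx⟩ := hx
    refine ⟨fun v => if v ∈ E then w v else 0, fun v => ?_, ?_⟩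
    · dsimp only
      split_ifs with h
      exacts [hw0 _ h, le_rfl]
    · rw [← hx, Finset.centerMass_eq_of_sum_1 _ _ hw1]
      exact Finset.sum_congr rfl fun v hv => by simp [hv]
  -- conv(E) is disjoint from W
  have hdisj : ∀ x ∈ convexHull ℝ (E : Set (Fin n → ℝ)), x ∉ W := by
    intro x hx hxW
    exact hconv (hcone x (hsub hx) hxW ▸ hx)
  -- K = conv(E) + W is closed, convex, and misses 0
  set K : Set (Fin n → ℝ) := convexHull ℝ (E : Set (Fin n → ℝ)) + (W : Set (Fin n → ℝ))
  have hKconv : Convex ℝ K := (convex_convexHull ℝ _).add W.convex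
  have hKclosed : IsClosed K :=
    IsClosed.add_left_of_isCompact (Submodule.closed_of_finiteDimensional W)
      (E.finite_toSet.isCompact_convexHull (𝕜 := ℝ))
  have h0K : (0 : Fin n → ℝ) ∉ K := by
    rintro ⟨a, ha, b, hb, hab⟩
    have : a = -b := eq_neg_of_add_eq_zero_left hab
    exact hdisj a ha (this ▸ W.neg_mem hb)
  obtain ⟨f, u, hf0, hfK⟩ := geometric_hahn_banach_point_closed hKconv hKclosed h0K
  have hu : 0 < u := by simpa using hf0
  have hmem : ∀ e ∈ E, ∀ w ∈ W, e + w ∈ K := fun e he w hw =>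
    ⟨e, subset_convexHull ℝ _ he, w, hw, rfl⟩
  have hvanish : ∀ w ∈ W, f w = 0 := by
    intro w hw
    by_contra hne
    have key : ∀ t : ℝ, u < f e₀ + t * f w := by
      intro t
      have := hfK _ (hmem e₀ he₀ (t • w) (W.smul_mem t hw))
      simpa [map_smul, smul_eq_mul] using this
    rcases lt_or_gt_of_ne hne with h | h
    · have := key ((u - f e₀) / f w)
      rw [div_mul_cancel₀ _ (ne_of_lt h)] at this
      linarith
    · have := key ((u - f e₀) / f w)
      rw [div_mul_cancel₀ _ (ne_of_gt h)] at this
      linarith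
  refine ⟨f.toLinearMap, hvanish, fun e he => ?_⟩
  have := hfK e (by simpa using hmem e he 0 W.zero_mem)
  simpa using hu.trans this
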